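/- arXiv:2406.05571 — 2 statements merged into one kernel-verified Lean document; each statement's English description precedes it below -/
import Mathlib

section
/- Let Ω ⊆ ℝ² be open, I a finite index set, and φ_i : ℝ² → ℝ, i ∈ I, functions differentiable at every point of Ω with Σ_{i∈I} φ_i = 1 on Ω. Define the second-order Whitney forms ψ_{ijk} := φ_i (∇φ_j × ∇φ_k) − φ_j (∇φ_i × ∇φ_k) − φ_k (∇φ_j × ∇φ_i) : Ω → ℝ, where a × b := a₁b₂ − a₂b₁ for a, b ∈ ℝ². Then for all i ≠ j in I and every x ∈ Ω, Σ_{k∈I, k∉{i,j}} ψ_{ijk}(x) = ∇φ_i(x) × ∇φ_j(x). Consequently, if the φ_i are twice continuously differentiable, the scalar curl of the first-order Whitney form ψ_{ij} = φ_i∇φ_j − φ_j∇φ_i satisfies ∇×ψ_{ij} = 2 Σ_{k≠i,j} ψ_{ijk} on Ω. -/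
/-- The planar cross product `a × b := a₁ b₂ - a₂ b₁` of two vectors in `ℝ²`. -/
def cross2 (a b : EuclideanSpace ℝ (Fin 2)) : ℝ := a 0 * b 1 - a 1 * b 0

/-- The partial derivative `∂ᵢ f x` of a scalar function on `ℝ²`. -/
noncomputable def pderiv2 (i : Fin 2) (f : EuclideanSpace ℝ (Fin 2) → ℝ)
    (x : EuclideanSpace ℝ (Fin 2)) : ℝ :=
  fderiv ℝ f x (EuclideanSpace.single i 1)

/-- The scalar curl `∇×F := ∂₁F₂ - ∂₂F₁` of a planar vector field `F = (F₁, F₂)`. -/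
noncomputable def scurl (F : EuclideanSpace ℝ (Fin 2) → EuclideanSpace ℝ (Fin 2))
    (x : EuclideanSpace ℝ (Fin 2)) : ℝ :=
  pderiv2 0 (fun y => F y 1) x - pderiv2 1 (fun y => F y 0) x

/-- The component `m` of the gradient is the partial derivative in direction `m`. -/
lemma grad_apply' (f : EuclideanSpace ℝ (Fin 2) → ℝ) (y : EuclideanSpace ℝ (Fin 2)) (m : Fin 2) :
    gradient f y m = fderiv ℝ f y (EuclideanSpace.single m 1) := by
  have h : fderiv ℝ f y (EuclideanSpace.single m (1:ℝ))
      = @inner ℝ _ _ (gradient f y) (EuclideanSpace.single m (1:ℝ)) :=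
    (InnerProductSpace.toDual_symm_apply).symm
  rw [h, EuclideanSpace.inner_single_right]
  simp

/-- Partial derivative of `y ↦ g y * ∂ₘ f y` when `g` is `C¹` and `f` is `C²` at `x`. -/
lemma pderiv_mul_pderiv {f g : EuclideanSpace ℝ (Fin 2) → ℝ} {x : EuclideanSpace ℝ (Fin 2)}
    (hg : DifferentiableAt ℝ g x) (hf : ContDiffAt ℝ 2 f x) (n m : Fin 2) :
    fderiv ℝ (fun y => g y * fderiv ℝ f y (EuclideanSpace.single m 1)) x
        (EuclideanSpace.single n 1)
      = g x * fderiv ℝ (fderiv ℝ f) x (EuclideanSpace.single n 1) (EuclideanSpace.single m 1)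
        + fderiv ℝ f x (EuclideanSpace.single m 1)
            * fderiv ℝ g x (EuclideanSpace.single n 1) := by
  have hD : DifferentiableAt ℝ (fun y => fderiv ℝ f y) x :=
    (hf.fderiv_right (m := 1) le_rfl).differentiableAt one_ne_zero
  have hA : DifferentiableAt ℝ (fun y => fderiv ℝ f y (EuclideanSpace.single m 1)) x :=
    hD.clm_apply (differentiableAt_const _)
  rw [fderiv_fun_mul hg hA, fderiv_clm_apply hD (differentiableAt_const _)]
  simp [mul_comm]

/-- For a partition of unity `{φ i}` on an open set `Ω ⊆ ℝ²`, the
second-order Whitney forms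
`ψ₃ i j k = φ i (∇φ j × ∇φ k) - φ j (∇φ i × ∇φ k) - φ k (∇φ j × ∇φ i)` satisfy the
telescoping identity `∑_{k ∉ {i,j}} ψ₃ i j k = ∇φ i × ∇φ j` on `Ω` for `i ≠ j`.
Consequently, if the `φ i` are twice continuously differentiable, the scalar curl of the
first-order Whitney form `ψ₂ i j = φ i • ∇φ j - φ j • ∇φ i` satisfies
`∇×(ψ₂ i j) = 2 ∑_{k ∉ {i,j}} ψ₃ i j k` on `Ω`. -/
theorem sum_whitney_two_forms_and_scurl
    {I : Type*} [Fintype I] [DecidableEq I]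
    (Ω : Set (EuclideanSpace ℝ (Fin 2))) (hΩ : IsOpen Ω)
    (φ : I → EuclideanSpace ℝ (Fin 2) → ℝ)
    (hdiff : ∀ i, ∀ x ∈ Ω, DifferentiableAt ℝ (φ i) x)
    (hsum : ∀ x ∈ Ω, ∑ i, φ i x = 1)
    (ψ₂ : I → I → EuclideanSpace ℝ (Fin 2) → EuclideanSpace ℝ (Fin 2))
    (hψ₂ : ∀ i j x, ψ₂ i j x = φ i x • gradient (φ j) x - φ j x • gradient (φ i) x)
    (ψ₃ : I → I → I → EuclideanSpace ℝ (Fin 2) → ℝ)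
    (hψ₃ : ∀ i j k x, ψ₃ i j k x
      = φ i x * cross2 (gradient (φ j) x) (gradient (φ k) x)
        - φ j x * cross2 (gradient (φ i) x) (gradient (φ k) x)
        - φ k x * cross2 (gradient (φ j) x) (gradient (φ i) x)) :
    (∀ i j, i ≠ j → ∀ x ∈ Ω,
        ∑ k ∈ Finset.univ.filter (fun k => k ≠ i ∧ k ≠ j), ψ₃ i j k x
          = cross2 (gradient (φ i) x) (gradient (φ j) x))
    ∧ ((∀ i, ContDiffOn ℝ 2 (φ i) Ω) → ∀ i j, i ≠ j → ∀ x ∈ Ω,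
        scurl (ψ₂ i j) x
          = 2 * ∑ k ∈ Finset.univ.filter (fun k => k ≠ i ∧ k ≠ j), ψ₃ i j k x) := by
  have part1 : ∀ i j, i ≠ j → ∀ x ∈ Ω,
      ∑ k ∈ Finset.univ.filter (fun k => k ≠ i ∧ k ≠ j), ψ₃ i j k x
        = cross2 (gradient (φ i) x) (gradient (φ j) x) := by
    intro i j hij x hx
    have hev : (fun y => ∑ k, φ k y) =ᶠ[nhds x] fun _ => (1:ℝ) := by
      filter_upwards [hΩ.mem_nhds hx] with y hy using hsum y hy
    have hf0 : fderiv ℝ (fun y => ∑ k, φ k y) x = 0 := by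
      rw [hev.fderiv_eq]; exact fderiv_const_apply 1
    have hfd : fderiv ℝ (fun y => ∑ k, φ k y) x = ∑ k, fderiv ℝ (φ k) x :=
      fderiv_fun_sum (fun k _ => hdiff k x hx)
    have hzero : ∀ m : Fin 2, ∑ k, gradient (φ k) x m = 0 := by
      intro m
      have h0 : (∑ k, fderiv ℝ (φ k) x) (EuclideanSpace.single m 1) = 0 := by
        rw [← hfd, hf0]; rfl
      rw [ContinuousLinearMap.sum_apply] at h0
      simpa [grad_apply'] using h0
    set s := Finset.univ.filter (fun k => k ≠ i ∧ k ≠ j) with hs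
    have key : ∀ f : I → ℝ, ∑ k ∈ s, f k = (∑ k, f k) - f i - f j := by
      intro f
      have h1 : s = Finset.univ \ {i, j} := by
        ext k; simp [hs, and_comm]
      rw [h1, Finset.sum_sdiff_eq_sub (Finset.subset_univ _), Finset.sum_pair hij]
      ring
    set a : I → ℝ := fun k => gradient (φ k) x 0 with ha
    set b : I → ℝ := fun k => gradient (φ k) x 1 with hb
    set p : I → ℝ := fun k => φ k x with hp
    have h1 : ∑ k ∈ s, ψ₃ i j k x
        = ∑ k ∈ s, ((p j * b i - p i * b j) * a k + (p i * a j - p j * a i) * b k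
            + (b j * a i - a j * b i) * p k) := by
      refine Finset.sum_congr rfl fun k _ => ?_
      rw [hψ₃]; simp only [cross2, ha, hb, hp]; ring
    rw [h1, Finset.sum_add_distrib, Finset.sum_add_distrib, ← Finset.mul_sum, ← Finset.mul_sum,
      ← Finset.mul_sum, key a, key b, key p, hzero 0, hzero 1, hsum x hx]
    simp only [cross2, ha, hb, hp]
    ring
  refine ⟨part1, ?_⟩
  intro h2 i j hij x hx
  rw [part1 i j hij x hx]
  have h2i : ContDiffAt ℝ 2 (φ i) x := (h2 i).contDiffAt (hΩ.mem_nhds hx)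
  have h2j : ContDiffAt ℝ 2 (φ j) x := (h2 j).contDiffAt (hΩ.mem_nhds hx)
  have hcomp : ∀ m : Fin 2, (fun y => ψ₂ i j y m)
      = fun y => φ i y * fderiv ℝ (φ j) y (EuclideanSpace.single m 1)
          - φ j y * fderiv ℝ (φ i) y (EuclideanSpace.single m 1) := by
    intro m
    funext y
    rw [hψ₂]
    simp [PiLp.sub_apply, PiLp.smul_apply, grad_apply', smul_eq_mul]
  have hdm : ∀ (f : EuclideanSpace ℝ (Fin 2) → ℝ), ContDiffAt ℝ 2 f x → ∀ m : Fin 2,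
      DifferentiableAt ℝ (fun y => fderiv ℝ f y (EuclideanSpace.single m (1:ℝ))) x := by
    intro f hf m
    exact ((hf.fderiv_right (m := 1) le_rfl).differentiableAt one_ne_zero).clm_apply
      (differentiableAt_const _)
  have hpd : ∀ n m : Fin 2, pderiv2 n (fun y => ψ₂ i j y m) x
      = (φ i x * fderiv ℝ (fderiv ℝ (φ j)) x (EuclideanSpace.single n 1)
            (EuclideanSpace.single m 1)
          + fderiv ℝ (φ j) x (EuclideanSpace.single m 1)
            * fderiv ℝ (φ i) x (EuclideanSpace.single n 1))
        - (φ j x * fderiv ℝ (fderiv ℝ (φ i)) x (EuclideanSpace.single n 1)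
            (EuclideanSpace.single m 1)
          + fderiv ℝ (φ i) x (EuclideanSpace.single m 1)
            * fderiv ℝ (φ j) x (EuclideanSpace.single n 1)) := by
    intro n m
    have hAi : DifferentiableAt ℝ
        (fun y => φ i y * fderiv ℝ (φ j) y (EuclideanSpace.single m 1)) x :=
      (hdiff i x hx).mul (hdm (φ j) h2j m)
    have hAj : DifferentiableAt ℝ
        (fun y => φ j y * fderiv ℝ (φ i) y (EuclideanSpace.single m 1)) x :=
      (hdiff j x hx).mul (hdm (φ i) h2i m)
    rw [pderiv2, hcomp m, fderiv_fun_sub hAi hAj, ContinuousLinearMap.sub_apply,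
      pderiv_mul_pderiv (hdiff i x hx) h2j n m, pderiv_mul_pderiv (hdiff j x hx) h2i n m]
  have hsymi := (h2i.isSymmSndFDerivAt (by norm_num)).eq
    (EuclideanSpace.single 0 1) (EuclideanSpace.single 1 1)
  have hsymj := (h2j.isSymmSndFDerivAt (by norm_num)).eq
    (EuclideanSpace.single 0 1) (EuclideanSpace.single 1 1)
  rw [scurl, hpd 0 1, hpd 1 0]
  simp only [cross2, grad_apply']
  rw [hsymi, hsymj]
  ring
end

section
/- Let Ω ⊆ ℝ² be a measurable set of finite Lebesgue measure, I a finite index set, and φ_i : ℝ² → ℝ, i ∈ I, twice continuously differentiable functions on an open set containing Ω with Σ_{i∈I} φ_i = 1 there, such that each φ_i and each ∇φ_i is bounded on Ω. Define ψ_{ij} := φ_i ∇φ_j − φ_j ∇φ_i and ψ_{ijk} := φ_i (∇φ_j × ∇φ_k) − φ_j (∇φ_i × ∇φ_k) − φ_k (∇φ_j × ∇φ_i), where a × b := a₁b₂ − a₂b₁. Then for all indices a, b, c, i, j ∈ I with i ≠ j, (ψ_{abc}, ∇×ψ_{ij})_{L²(Ω)} = 2 Σ_{k∈I, k∉{i,j}}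 (ψ_{abc}, ψ_{ijk})_{L²(Ω)}, where ∇×F := ∂₁F₂ − ∂₂F₁ is the scalar curl and (f, g)_{L²(Ω)} := ∫_Ω f g dx for scalar functions. -/
open MeasureTheory

namespace WhitneyAux

noncomputable abbrev E2 := EuclideanSpace ℝ (Fin 2)

lemma gradient_coord (f : E2 → ℝ) (x : E2) (k : Fin 2) :
    gradient f x k = fderiv ℝ f x (EuclideanSpace.single k 1) := by
  have h : (inner ℝ (gradient f x) (EuclideanSpace.single k (1:ℝ)) : ℝ)
      = fderiv ℝ f x (EuclideanSpace.single k 1) := by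
    rw [gradient]; exact InnerProductSpace.toDual_symm_apply
  rw [EuclideanSpace.inner_single_right] at h
  simpa using h

lemma abs_coord_le (v : E2) (m : Fin 2) : |v m| ≤ ‖v‖ := by
  have h := abs_real_inner_le_norm v (EuclideanSpace.single m (1:ℝ))
  simpa [EuclideanSpace.inner_single_right, EuclideanSpace.norm_single] using h

lemma abs_cross2_le (u v : E2) : |cross2 u v| ≤ 2 * ‖u‖ * ‖v‖ := by
  have h0u := abs_coord_le u 0; have h1u := abs_coord_le u 1
  have h0v := abs_coord_le v 0; have h1v := abs_coord_le v 1
  have hnu : (0:ℝ) ≤ ‖u‖ := norm_nonneg _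
  have hnv : (0:ℝ) ≤ ‖v‖ := norm_nonneg _
  calc |cross2 u v| ≤ |u 0| * |v 1| + |u 1| * |v 0| := by
        rw [cross2]; refine (abs_sub _ _).trans ?_; rw [abs_mul, abs_mul]
      _ ≤ ‖u‖ * ‖v‖ + ‖u‖ * ‖v‖ := by
        have t1 : |u 0| * |v 1| ≤ ‖u‖ * ‖v‖ :=
          mul_le_mul h0u h1v (abs_nonneg _) hnu
        have t2 : |u 1| * |v 0| ≤ ‖u‖ * ‖v‖ :=
          mul_le_mul h1u h0v (abs_nonneg _) hnu
        linarith
      _ = 2 * ‖u‖ * ‖v‖ := by ring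

lemma cross2_sum_right {ι : Type*} (a : E2) (s : Finset ι) (v : ι → E2) :
    ∑ k ∈ s, cross2 a (v k) = cross2 a (∑ k ∈ s, v k) := by
  unfold cross2
  rw [show (∑ k ∈ s, v k) 0 = ∑ k ∈ s, v k 0 from by rw [WithLp.ofLp_sum]; exact Finset.sum_apply 0 s _,
    show (∑ k ∈ s, v k) 1 = ∑ k ∈ s, v k 1 from by rw [WithLp.ofLp_sum]; exact Finset.sum_apply 1 s _,
    Finset.mul_sum, Finset.mul_sum, ← Finset.sum_sub_distrib]

lemma key_deriv (f g : E2 → ℝ) (x : E2) (hf : ContDiffAt ℝ 2 f x) (hg : ContDiffAt ℝ 2 g x)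
    (m n : Fin 2) :
    fderiv ℝ (fun y => f y * fderiv ℝ g y (EuclideanSpace.single m 1)) x (EuclideanSpace.single n 1)
      = fderiv ℝ f x (EuclideanSpace.single n 1) * fderiv ℝ g x (EuclideanSpace.single m 1)
        + f x * fderiv ℝ (fderiv ℝ g) x (EuclideanSpace.single n 1) (EuclideanSpace.single m 1) := by
  have hf1 : HasFDerivAt f (fderiv ℝ f x) x :=
    (hf.differentiableAt (by norm_num)).hasFDerivAt
  have hg2 : HasFDerivAt (fderiv ℝ g) (fderiv ℝ (fderiv ℝ g) x) x := by
    have := (hg.fderiv_right (m := 1) (by norm_num)).differentiableAt one_ne_zero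
    exact this.hasFDerivAt
  have h := hf1.fun_mul (hg2.clm_apply (hasFDerivAt_const (EuclideanSpace.single m (1:ℝ)) x))
  rw [h.fderiv]
  simp; ring

lemma diffAt_mul_fderiv (f g : E2 → ℝ) (x : E2) (hf : ContDiffAt ℝ 2 f x)
    (hg : ContDiffAt ℝ 2 g x) (m : Fin 2) :
    DifferentiableAt ℝ (fun y => f y * fderiv ℝ g y (EuclideanSpace.single m 1)) x := by
  have hf1 : HasFDerivAt f (fderiv ℝ f x) x :=
    (hf.differentiableAt (by norm_num)).hasFDerivAt
  have hg2 : HasFDerivAt (fderiv ℝ g) (fderiv ℝ (fderiv ℝ g) x) x := by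
    have := (hg.fderiv_right (m := 1) (by norm_num)).differentiableAt one_ne_zero
    exact this.hasFDerivAt
  exact (hf1.mul (hg2.clm_apply (hasFDerivAt_const (EuclideanSpace.single m (1:ℝ)) x))).differentiableAt

/-- Key pointwise curl formula. -/
lemma scurl_eq (f g : E2 → ℝ) (x : E2) (hf : ContDiffAt ℝ 2 f x) (hg : ContDiffAt ℝ 2 g x) :
    scurl (fun y => f y • gradient g y - g y • gradient f y) x
      = 2 * cross2 (gradient f x) (gradient g x) := by
  have hrw : ∀ m : Fin 2, (fun y => (f y • gradient g y - g y • gradient f y) m)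
      = fun y => f y * fderiv ℝ g y (EuclideanSpace.single m 1)
          - g y * fderiv ℝ f y (EuclideanSpace.single m 1) := by
    intro m; funext y
    simp [gradient_coord, PiLp.sub_apply, PiLp.smul_apply, smul_eq_mul]
  have hsym_f := (hf.isSymmSndFDerivAt (by simp [minSmoothness_of_isRCLikeNormedField])) (EuclideanSpace.single 0 1) (EuclideanSpace.single 1 1)
  have hsym_g := (hg.isSymmSndFDerivAt (by simp [minSmoothness_of_isRCLikeNormedField])) (EuclideanSpace.single 0 1) (EuclideanSpace.single 1 1)
  have hd1 : ∀ m n : Fin 2,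
      fderiv ℝ (fun y => f y * fderiv ℝ g y (EuclideanSpace.single m 1)
        - g y * fderiv ℝ f y (EuclideanSpace.single m 1)) x (EuclideanSpace.single n 1)
      = (fderiv ℝ f x (EuclideanSpace.single n 1) * fderiv ℝ g x (EuclideanSpace.single m 1)
          + f x * fderiv ℝ (fderiv ℝ g) x (EuclideanSpace.single n 1) (EuclideanSpace.single m 1))
        - (fderiv ℝ g x (EuclideanSpace.single n 1) * fderiv ℝ f x (EuclideanSpace.single m 1)
          + g x * fderiv ℝ (fderiv ℝ f) x (EuclideanSpace.single n 1) (EuclideanSpace.single m 1)) := by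
    intro m n
    rw [fderiv_fun_sub (diffAt_mul_fderiv f g x hf hg m) (diffAt_mul_fderiv g f x hg hf m)]
    rw [ContinuousLinearMap.sub_apply, key_deriv f g x hf hg m n, key_deriv g f x hg hf m n]
  unfold scurl pderiv2
  rw [hrw 0, hrw 1, hd1 1 0, hd1 0 1, cross2, gradient_coord, gradient_coord,
    gradient_coord, gradient_coord]
  rw [hsym_f, hsym_g]
  ring

end WhitneyAux

open WhitneyAux in
/-- For a `C²` partition of unity `{φ i}` on an open neighborhood `U` of a
measurable set `Ω ⊆ ℝ²` of finite measure, with `φ i` and `∇φ i` bounded on `Ω`, the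
first- and second-order Whitney forms satisfy the variational curl identity
`(ψ₃ a b c, ∇×ψ₂ i j)_{L²(Ω)} = 2 ∑_{k ∉ {i,j}} (ψ₃ a b c, ψ₃ i j k)_{L²(Ω)}`. -/
theorem whitney_variational_curl
    {I : Type*} [Fintype I] [DecidableEq I]
    (Ω U : Set (EuclideanSpace ℝ (Fin 2))) (hU : IsOpen U) (hΩU : Ω ⊆ U)
    (hmeas : MeasurableSet Ω) (hfin : volume Ω < ⊤)
    (φ : I → EuclideanSpace ℝ (Fin 2) → ℝ)
    (hC2 : ∀ i, ContDiffOn ℝ 2 (φ i) U)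
    (hsum : ∀ x ∈ U, ∑ i, φ i x = 1)
    (hbφ : ∀ i, ∃ C : ℝ, ∀ x ∈ Ω, |φ i x| ≤ C)
    (hbg : ∀ i, ∃ C : ℝ, ∀ x ∈ Ω, ‖gradient (φ i) x‖ ≤ C)
    (ψ₂ : I → I → EuclideanSpace ℝ (Fin 2) → EuclideanSpace ℝ (Fin 2))
    (hψ₂ : ∀ i j x, ψ₂ i j x = φ i x • gradient (φ j) x - φ j x • gradient (φ i) x)
    (ψ₃ : I → I → I → EuclideanSpace ℝ (Fin 2) → ℝ)
    (hψ₃ : ∀ i j k x, ψ₃ i j k x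
      = φ i x * cross2 (gradient (φ j) x) (gradient (φ k) x)
        - φ j x * cross2 (gradient (φ i) x) (gradient (φ k) x)
        - φ k x * cross2 (gradient (φ j) x) (gradient (φ i) x))
    (a b c i j : I) (hij : i ≠ j) :
    (∫ x in Ω, ψ₃ a b c x * scurl (ψ₂ i j) x)
      = 2 * ∑ k ∈ Finset.univ.filter (fun k => k ≠ i ∧ k ≠ j),
          ∫ x in Ω, ψ₃ a b c x * ψ₃ i j k x := by
  classical
  set F := Finset.univ.filter (fun k : I => k ≠ i ∧ k ≠ j) with hF
  -- continuity of gradients on U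
  have hgradcont : ∀ l, ContinuousOn (fun x => gradient (φ l) x) U := by
    intro l
    have hf' : ContinuousOn (fderiv ℝ (φ l)) U :=
      (hC2 l).continuousOn_fderiv_of_isOpen hU (by norm_num)
    have hc : Continuous fun p : (EuclideanSpace ℝ (Fin 2) →L[ℝ] ℝ) =>
        (InnerProductSpace.toDual ℝ (EuclideanSpace ℝ (Fin 2))).symm p :=
      (InnerProductSpace.toDual ℝ (EuclideanSpace ℝ (Fin 2))).symm.continuous
    exact hc.comp_continuousOn hf'
  have hgradcoordcont : ∀ l (m : Fin 2), ContinuousOn (fun x => gradient (φ l) x m) U := by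
    intro l m
    exact (PiLp.continuous_apply 2 _ m).comp_continuousOn (hgradcont l)
  have hψ₃cont : ∀ l m n, ContinuousOn (ψ₃ l m n) U := by
    intro l m n
    have heq : ψ₃ l m n = fun x =>
        φ l x * cross2 (gradient (φ m) x) (gradient (φ n) x)
        - φ m x * cross2 (gradient (φ l) x) (gradient (φ n) x)
        - φ n x * cross2 (gradient (φ m) x) (gradient (φ l) x) := funext (hψ₃ l m n)
    rw [heq]
    unfold cross2
    refine ContinuousOn.sub (ContinuousOn.sub ?_ ?_) ?_
    · exact (hC2 l).continuousOn.mul (ContinuousOn.sub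
        ((hgradcoordcont m 0).mul (hgradcoordcont n 1))
        ((hgradcoordcont m 1).mul (hgradcoordcont n 0)))
    · exact (hC2 m).continuousOn.mul (ContinuousOn.sub
        ((hgradcoordcont l 0).mul (hgradcoordcont n 1))
        ((hgradcoordcont l 1).mul (hgradcoordcont n 0)))
    · exact (hC2 n).continuousOn.mul (ContinuousOn.sub
        ((hgradcoordcont m 0).mul (hgradcoordcont l 1))
        ((hgradcoordcont m 1).mul (hgradcoordcont l 0)))
  -- boundedness of ψ₃ on Ω
  have hψ₃bd : ∀ l m n, ∃ C : ℝ, ∀ x ∈ Ω, |ψ₃ l m n x| ≤ C := by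
    intro l m n
    obtain ⟨Cl, hCl⟩ := hbφ l
    obtain ⟨Cm, hCm⟩ := hbφ m
    obtain ⟨Cn, hCn⟩ := hbφ n
    obtain ⟨Gl, hGl⟩ := hbg l
    obtain ⟨Gm, hGm⟩ := hbg m
    obtain ⟨Gn, hGn⟩ := hbg n
    refine ⟨|Cl| * (2 * |Gm| * |Gn|) + |Cm| * (2 * |Gl| * |Gn|) + |Cn| * (2 * |Gm| * |Gl|), ?_⟩
    intro x hx
    rw [hψ₃]
    have habs : ∀ (p : ℝ) (u v : E2) (Cp Gu Gv : ℝ), |p| ≤ Cp → ‖u‖ ≤ Gu → ‖v‖ ≤ Gv →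
        |p * cross2 u v| ≤ |Cp| * (2 * |Gu| * |Gv|) := by
      intro p u v Cp Gu Gv hp hu hv
      rw [abs_mul]
      have h1 : |p| ≤ |Cp| := hp.trans (le_abs_self _)
      have h2 : |cross2 u v| ≤ 2 * |Gu| * |Gv| := by
        refine (abs_cross2_le u v).trans ?_
        have hu' : ‖u‖ ≤ |Gu| := hu.trans (le_abs_self _)
        have hv' : ‖v‖ ≤ |Gv| := hv.trans (le_abs_self _)
        have := mul_le_mul (mul_le_mul_of_nonneg_left hu' (by norm_num : (0:ℝ) ≤ 2)) hv'
          (norm_nonneg _) (by positivity)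
        linarith
      exact mul_le_mul h1 h2 (abs_nonneg _) (abs_nonneg _)
    have t1 := habs (φ l x) _ _ Cl Gm Gn (hCl x hx) (hGm x hx) (hGn x hx)
    have t2 := habs (φ m x) _ _ Cm Gl Gn (hCm x hx) (hGl x hx) (hGn x hx)
    have t3 := habs (φ n x) _ _ Cn Gm Gl (hCn x hx) (hGm x hx) (hGl x hx)
    calc |φ l x * cross2 (gradient (φ m) x) (gradient (φ n) x)
          - φ m x * cross2 (gradient (φ l) x) (gradient (φ n) x)
          - φ n x * cross2 (gradient (φ m) x) (gradient (φ l) x)|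
        ≤ |φ l x * cross2 (gradient (φ m) x) (gradient (φ n) x)
            - φ m x * cross2 (gradient (φ l) x) (gradient (φ n) x)|
          + |φ n x * cross2 (gradient (φ m) x) (gradient (φ l) x)| := abs_sub _ _
      _ ≤ |φ l x * cross2 (gradient (φ m) x) (gradient (φ n) x)|
          + |φ m x * cross2 (gradient (φ l) x) (gradient (φ n) x)|
          + |φ n x * cross2 (gradient (φ m) x) (gradient (φ l) x)| := by
            have := abs_sub (φ l x * cross2 (gradient (φ m) x) (gradient (φ n) x))
              (φ m x * cross2 (gradient (φ l) x) (gradient (φ n) x))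
            linarith
      _ ≤ _ := by linarith
  -- integrability
  have haesm : ∀ k, AEStronglyMeasurable (fun x => ψ₃ a b c x * ψ₃ i j k x)
      (volume.restrict Ω) := by
    intro k
    have h1 : ContinuousOn (fun x => ψ₃ a b c x * ψ₃ i j k x) U :=
      (hψ₃cont a b c).mul (hψ₃cont i j k)
    exact (h1.aestronglyMeasurable hU.measurableSet).mono_measure
      (Measure.restrict_mono hΩU le_rfl)
  have hinteg : ∀ k, IntegrableOn (fun x => ψ₃ a b c x * ψ₃ i j k x) Ω := by
    intro k
    obtain ⟨C1, hC1⟩ := hψ₃bd a b c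
    obtain ⟨C2, hC2'⟩ := hψ₃bd i j k
    refine Integrable.mono' (g := fun _ => |C1| * |C2|)
      (integrableOn_const hfin.ne) (haesm k) ?_
    rw [ae_restrict_iff' hmeas]
    filter_upwards with x hx
    rw [Real.norm_eq_abs, abs_mul]
    exact mul_le_mul ((hC1 x hx).trans (le_abs_self _)) ((hC2' x hx).trans (le_abs_self _))
      (abs_nonneg _) (abs_nonneg _)
  -- sum of gradients vanishes on U
  have hgradsum : ∀ x ∈ U, ∑ k, gradient (φ k) x = 0 := by
    intro x hx
    have hdiff : ∀ l : I, DifferentiableAt ℝ (φ l) x := fun l =>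
      ((hC2 l).contDiffAt (hU.mem_nhds hx)).differentiableAt (by norm_num)
    have hfder : ∑ k, fderiv ℝ (φ k) x = 0 := by
      have h1 : fderiv ℝ (fun y => ∑ k, φ k y) x = ∑ k, fderiv ℝ (φ k) x :=
        fderiv_fun_sum (fun k _ => hdiff k)
      have hev : (fun y => ∑ k, φ k y) =ᶠ[nhds x] (fun _ => (1:ℝ)) := by
        filter_upwards [hU.mem_nhds hx] with y hy using hsum y hy
      rw [← h1, hev.fderiv_eq]
      simp
    calc ∑ k, gradient (φ k) x
        = (InnerProductSpace.toDual ℝ (EuclideanSpace ℝ (Fin 2))).symm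
            (∑ k, fderiv ℝ (φ k) x) := by
          simp only [gradient]; rw [map_sum]
      _ = 0 := by rw [hfder]; simp
  -- pointwise identity on U
  have hpt : ∀ x ∈ U, ψ₃ a b c x * scurl (ψ₂ i j) x
      = ∑ k ∈ F, 2 * (ψ₃ a b c x * ψ₃ i j k x) := by
    intro x hx
    have hA : scurl (ψ₂ i j) x = 2 * cross2 (gradient (φ i) x) (gradient (φ j) x) := by
      have hfun : ψ₂ i j = fun y => φ i y • gradient (φ j) y - φ j y • gradient (φ i) y :=
        funext fun y => hψ₂ i j y
      rw [hfun]
      exact scurl_eq _ _ x ((hC2 i).contDiffAt (hU.mem_nhds hx))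
        ((hC2 j).contDiffAt (hU.mem_nhds hx))
    have hB : ∑ k ∈ F, ψ₃ i j k x = cross2 (gradient (φ i) x) (gradient (φ j) x) := by
      have hterm0 : ∀ k, k = i ∨ k = j → ψ₃ i j k x = 0 := by
        intro k hk
        rcases hk with rfl | rfl <;> (rw [hψ₃]; unfold cross2; ring)
      have hfull : ∑ k ∈ F, ψ₃ i j k x = ∑ k, ψ₃ i j k x := by
        refine Finset.sum_subset (Finset.subset_univ _) ?_
        intro k _ hk
        rw [hF] at hk
        simp only [Finset.mem_filter, Finset.mem_univ, true_and, not_and_or, not_not] at hk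
        exact hterm0 k hk
      rw [hfull]
      have hexp : ∑ k, ψ₃ i j k x
          = φ i x * cross2 (gradient (φ j) x) (∑ k, gradient (φ k) x)
            - φ j x * cross2 (gradient (φ i) x) (∑ k, gradient (φ k) x)
            - (∑ k, φ k x) * cross2 (gradient (φ j) x) (gradient (φ i) x) := by
        rw [← cross2_sum_right, ← cross2_sum_right, Finset.mul_sum, Finset.mul_sum,
          Finset.sum_mul, ← Finset.sum_sub_distrib, ← Finset.sum_sub_distrib]
        exact Finset.sum_congr rfl fun k _ => hψ₃ i j k x
      rw [hexp, hgradsum x hx, hsum x hx]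
      unfold cross2
      simp
      ring
    rw [hA, ← hB, Finset.mul_sum, Finset.mul_sum]
    exact Finset.sum_congr rfl fun k _ => by ring
  -- assemble
  calc (∫ x in Ω, ψ₃ a b c x * scurl (ψ₂ i j) x)
      = ∫ x in Ω, ∑ k ∈ F, 2 * (ψ₃ a b c x * ψ₃ i j k x) := by
        refine setIntegral_congr_fun hmeas ?_
        intro x hx
        exact hpt x (hΩU hx)
    _ = ∑ k ∈ F, ∫ x in Ω, 2 * (ψ₃ a b c x * ψ₃ i j k x) :=
        integral_finset_sum F (fun k _ => (hinteg k).const_mul 2)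
    _ = 2 * ∑ k ∈ F, ∫ x in Ω, ψ₃ a b c x * ψ₃ i j k x := by
        rw [Finset.mul_sum]
        exact Finset.sum_congr rfl fun k _ => integral_const_mul 2 _
end
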